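/- If B₁ is a triangle basis of size k₁ and B₂ a triangle basis of size k₂, then for any shift 0 ≤ h ≤ k₁ the vertically shifted sum B₁ ⊖ₕ B₂ := ((k₂,0) + B₁) ∪ ((0,h) + B₂) is a triangle basis of size k₁ + k₂, i.e., its filling is T_{k₁+k₂}. -/

import Mathlib

/-- A set of cells is closed under filling steps: whenever two of the three
cells `(x,y)`, `(x+1,y)`, `(x,y+1)` belong to it, the third does too. -/
def FillClosed (S : Set (ℤ × ℤ)) : Prop :=
  ∀ x y : ℤ,
    (((x, y) ∈ S ∧ (x + 1, y) ∈ S) ∨ ((x, y) ∈ S ∧ (x, y + 1) ∈ S) ∨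
      ((x + 1, y) ∈ S ∧ (x, y + 1) ∈ S)) →
    ((x, y) ∈ S ∧ (x + 1, y) ∈ S ∧ (x, y + 1) ∈ S)

/-- The filling of `P`: the smallest superset of `P` closed under filling steps. -/
def fill (P : Set (ℤ × ℤ)) : Set (ℤ × ℤ) :=
  ⋂₀ {S : Set (ℤ × ℤ) | P ⊆ S ∧ FillClosed S}

/-- The triangle $T_n$. -/
def triangle (n : ℕ) : Set (ℤ × ℤ) :=
  {p | 0 ≤ p.1 ∧ 0 ≤ p.2 ∧ p.1 + p.2 < (n : ℤ)}

lemma subset_fill (P : Set (ℤ × ℤ)) : P ⊆ fill P := by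
  intro p hp
  rw [fill, Set.mem_sInter]
  exact fun S hS => hS.1 hp

lemma fill_subset {P S : Set (ℤ × ℤ)} (h1 : P ⊆ S) (h2 : FillClosed S) : fill P ⊆ S :=
  Set.sInter_subset_of_mem ⟨h1, h2⟩

lemma fill_mono {P Q : Set (ℤ × ℤ)} (h : P ⊆ Q) : fill P ⊆ fill Q := by
  intro p hp
  rw [fill, Set.mem_sInter] at hp ⊢
  exact fun S hS => hp S ⟨h.trans hS.1, hS.2⟩

lemma fillClosed_fill (P : Set (ℤ × ℤ)) : FillClosed (fill P) := by
  intro x y hxy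
  have H : ∀ S ∈ {S : Set (ℤ × ℤ) | P ⊆ S ∧ FillClosed S},
      (x, y) ∈ S ∧ (x + 1, y) ∈ S ∧ (x, y + 1) ∈ S := by
    intro S hS
    apply hS.2 x y
    rcases hxy with ⟨h1, h2⟩ | ⟨h1, h2⟩ | ⟨h1, h2⟩
    · exact Or.inl ⟨Set.mem_sInter.mp h1 S hS, Set.mem_sInter.mp h2 S hS⟩
    · exact Or.inr (Or.inl ⟨Set.mem_sInter.mp h1 S hS, Set.mem_sInter.mp h2 S hS⟩)
    · exact Or.inr (Or.inr ⟨Set.mem_sInter.mp h1 S hS, Set.mem_sInter.mp h2 S hS⟩)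
  exact ⟨Set.mem_sInter.mpr fun S hS => (H S hS).1,
    Set.mem_sInter.mpr fun S hS => (H S hS).2.1,
    Set.mem_sInter.mpr fun S hS => (H S hS).2.2⟩

lemma fillClosed_triangle (n : ℕ) : FillClosed (triangle n) := by
  intro x y hxy
  simp only [triangle, Set.mem_setOf_eq] at hxy ⊢
  rcases hxy with ⟨h1, h2⟩ | ⟨h1, h2⟩ | ⟨h1, h2⟩ <;>
    exact ⟨⟨by omega, by omega, by omega⟩, ⟨by omega, by omega, by omega⟩,
      ⟨by omega, by omega, by omega⟩⟩

lemma translate_fill (a b : ℤ) (P : Set (ℤ × ℤ)) :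
    (fun p : ℤ × ℤ => (p.1 + a, p.2 + b)) '' fill P ⊆
      fill ((fun p : ℤ × ℤ => (p.1 + a, p.2 + b)) '' P) := by
  set T := fill ((fun p : ℤ × ℤ => (p.1 + a, p.2 + b)) '' P) with hT
  rintro _ ⟨p, hp, rfl⟩
  have key : fill P ⊆ {q : ℤ × ℤ | (q.1 + a, q.2 + b) ∈ T} := by
    apply fill_subset
    · intro q hq
      exact subset_fill _ ⟨q, hq, rfl⟩
    · intro x y hxy
      simp only [Set.mem_setOf_eq] at hxy ⊢
      have e1 : x + 1 + a = x + a + 1 := by ring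
      have e2 : y + 1 + b = y + b + 1 := by ring
      rw [e1, e2] at hxy ⊢
      exact fillClosed_fill _ (x + a) (y + b) hxy
  exact key hp

lemma key_lemma (k₁ k₂ h : ℕ) (hh : h ≤ k₁) (S : Set (ℤ × ℤ)) (hS : FillClosed S)
    (hA : ∀ x y : ℤ, (k₂ : ℤ) ≤ x → 0 ≤ y → x + y < (k₁ : ℤ) + k₂ → (x, y) ∈ S)
    (hB : ∀ x y : ℤ, 0 ≤ x → (h : ℤ) ≤ y → x + y < (k₂ : ℤ) + h → (x, y) ∈ S) :
    triangle (k₁ + k₂) ⊆ S := by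
  have col : ∀ j : ℕ, (j : ℤ) ≤ k₂ → ∀ y : ℤ, 0 ≤ y →
      ((k₂ : ℤ) - j) + y < (k₁ : ℤ) + k₂ → ((k₂ : ℤ) - j, y) ∈ S := by
    intro j
    induction j with
    | zero =>
      intro _ y hy hlt
      exact hA _ y (by push_cast; omega) hy hlt
    | succ j ih =>
      intro hj y hy hlt
      push_cast at hj hlt ⊢
      set x : ℤ := (k₂ : ℤ) - (j + 1) with hxdef
      have hj' : (j : ℤ) ≤ k₂ := by omega
      have hx0 : 0 ≤ x := by omega
      have hxk : x + 1 = (k₂ : ℤ) - j := by ring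
      have ih' : ∀ y : ℤ, 0 ≤ y → (x + 1) + y < (k₁ : ℤ) + k₂ → (x + 1, y) ∈ S := by
        intro y hy hlt
        rw [hxk]
        exact ih hj' y hy (by omega)
      have hbase : (x, (h : ℤ)) ∈ S :=
        hB x h hx0 le_rfl (by omega)
      have hh0 : (0 : ℤ) ≤ h := by positivity
      have hhk : (h : ℤ) ≤ k₁ := by exact_mod_cast hh
      have up : ∀ z : ℤ, (h : ℤ) ≤ z → (x + z < (k₁ : ℤ) + k₂ → (x, z) ∈ S) := by
        intro z hz
        refine Int.le_induction (motive := fun z _ => x + z < (k₁ : ℤ) + k₂ → (x, z) ∈ S) (fun _ => hbase) ?_ z hz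
        intro n hn ihn hlt
        have h1 : (x, n) ∈ S := ihn (by omega)
        have h2 : (x + 1, n) ∈ S := ih' n (by omega) (by omega)
        exact (hS x n (Or.inl ⟨h1, h2⟩)).2.2
      have down : ∀ z : ℤ, z ≤ (h : ℤ) → (0 ≤ z → (x, z) ∈ S) := by
        intro z hz
        refine Int.le_induction_down (motive := fun z _ => 0 ≤ z → (x, z) ∈ S) (fun _ => hbase) ?_ z hz
        intro n hn ihn h0
        have h1 : (x, n) ∈ S := ihn (by omega)
        have h2 : (x + 1, n - 1) ∈ S := ih' (n - 1) h0 (by omega)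
        have h1' : (x, n - 1 + 1) ∈ S := by rw [sub_add_cancel]; exact h1
        exact (hS x (n - 1) (Or.inr (Or.inr ⟨h2, h1'⟩))).1
      rcases le_or_gt (h : ℤ) y with hcase | hcase
      · exact up y hcase (by omega)
      · exact down y (by omega) hy
  rintro ⟨x, y⟩ ⟨hx, hy, hlt⟩
  simp only at hx hy hlt
  push_cast at hlt
  rcases le_or_gt (k₂ : ℤ) x with hcase | hcase
  · exact hA x y hcase hy hlt
  · have hj : ((k₂ - x).toNat : ℤ) = (k₂ : ℤ) - x := Int.toNat_of_nonneg (by omega)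
    have := col (k₂ - x).toNat (by omega) y hy (by omega)
    rwa [hj, show (k₂ : ℤ) - ((k₂ : ℤ) - x) = x by ring] at this

/-- A vertically shifted sum of two triangle bases is a triangle basis. -/
theorem shifted_sum_basis (k₁ k₂ h : ℕ) (B₁ B₂ : Set (ℤ × ℤ))
    (hB₁ : B₁ ⊆ triangle k₁) (hc₁ : B₁.ncard = k₁) (hf₁ : fill B₁ = triangle k₁)
    (hB₂ : B₂ ⊆ triangle k₂) (hc₂ : B₂.ncard = k₂) (hf₂ : fill B₂ = triangle k₂)
    (hh : h ≤ k₁) :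
    fill ((fun p : ℤ × ℤ => (p.1 + (k₂ : ℤ), p.2)) '' B₁ ∪
          (fun p : ℤ × ℤ => (p.1, p.2 + (h : ℤ))) '' B₂) = triangle (k₁ + k₂) := by
  have e₁ : (fun p : ℤ × ℤ => (p.1 + (k₂ : ℤ), p.2)) =
      (fun p : ℤ × ℤ => (p.1 + (k₂ : ℤ), p.2 + 0)) := by funext p; simp
  have e₂ : (fun p : ℤ × ℤ => (p.1, p.2 + (h : ℤ))) =
      (fun p : ℤ × ℤ => (p.1 + 0, p.2 + (h : ℤ))) := by funext p; simp
  set U := (fun p : ℤ × ℤ => (p.1 + (k₂ : ℤ), p.2)) '' B₁ ∪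
      (fun p : ℤ × ℤ => (p.1, p.2 + (h : ℤ))) '' B₂ with hU
  apply subset_antisymm
  · apply fill_subset ?_ (fillClosed_triangle _)
    rintro _ (⟨p, hp, rfl⟩ | ⟨p, hp, rfl⟩)
    · obtain ⟨h1, h2, h3⟩ := hB₁ hp
      refine ⟨?_, ?_, ?_⟩ <;> simp <;> push_cast <;> omega
    · obtain ⟨h1, h2, h3⟩ := hB₂ hp
      refine ⟨?_, ?_, ?_⟩ <;> simp <;> push_cast <;> omega
  · apply key_lemma k₁ k₂ h hh (fill U) (fillClosed_fill U)
    · intro x y hx hy hlt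
      have hmem : (x - k₂, y) ∈ fill B₁ := by
        rw [hf₁]; exact ⟨by omega, hy, by omega⟩
      have : ((x - k₂) + (k₂ : ℤ), y + 0) ∈
          fill ((fun p : ℤ × ℤ => (p.1 + (k₂ : ℤ), p.2 + 0)) '' B₁) :=
        translate_fill (k₂ : ℤ) 0 B₁ ⟨(x - k₂, y), hmem, rfl⟩
      rw [← e₁] at this
      have h2 : fill ((fun p : ℤ × ℤ => (p.1 + (k₂ : ℤ), p.2)) '' B₁) ⊆ fill U :=
        fill_mono (Set.subset_union_left)
      have := h2 this
      simpa using this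
    · intro x y hx hy hlt
      have hmem : (x, y - h) ∈ fill B₂ := by
        rw [hf₂]; exact ⟨hx, by omega, by omega⟩
      have : (x + 0, (y - h) + (h : ℤ)) ∈
          fill ((fun p : ℤ × ℤ => (p.1 + 0, p.2 + (h : ℤ))) '' B₂) :=
        translate_fill 0 (h : ℤ) B₂ ⟨(x, y - h), hmem, rfl⟩
      rw [← e₂] at this
      have h2 : fill ((fun p : ℤ × ℤ => (p.1, p.2 + (h : ℤ))) '' B₂) ⊆ fill U :=
        fill_mono (Set.subset_union_right)
      have := h2 this
      simpa using this
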